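/- (Invariance of the |·|₁ semi-norm under PGA with small coherence) If D is a dictionary with μ₁(D) < 1/3 and f ∈ A¹(D), then every PGA residual f_m lies in A¹(D) with |f_m|₁ ≤ |f|₁. -/

import Mathlib

open RealInnerProductSpace Finset

/-- The set of finite linear combinations `Σ_{g∈S} c_g g` of distinct
dictionary elements with `Σ_{g∈S} |c_g|^p ≤ M^p`. -/
def repSet {H : Type*} [NormedAddCommGroup H] [InnerProductSpace ℝ H]
    (D : Set H) (p M : ℝ) : Set H :=
  {h | ∃ (S : Finset H) (c : H → ℝ), ↑S ⊆ D ∧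
    (∑ g ∈ S, |c g| ^ p) ≤ M ^ p ∧ h = ∑ g ∈ S, c g • g}

/-- The class `A^p(D, M)` is the closure of `repSet D p M`. -/
def Aclass {H : Type*} [NormedAddCommGroup H] [InnerProductSpace ℝ H]
    (D : Set H) (p M : ℝ) : Set H :=
  closure (repSet D p M)

/-- The semi-norm `|f|_p = inf {M ≥ 0 : f ∈ A^p(D, M)}`. -/
noncomputable def Anorm {H : Type*} [NormedAddCommGroup H]
    [InnerProductSpace ℝ H] (D : Set H) (p : ℝ) (f : H) : ℝ :=
  sInf {M | 0 ≤ M ∧ f ∈ Aclass D p M}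

lemma norm_sum_le_abs' {H : Type*} [NormedAddCommGroup H] [InnerProductSpace ℝ H]
    {D : Set H} (hDnorm : ∀ g ∈ D, ‖g‖ = 1) {S : Finset H} (hS : ↑S ⊆ D) (c : H → ℝ) :
    ‖∑ x ∈ S, c x • x‖ ≤ ∑ x ∈ S, |c x| := by
  refine (norm_sum_le _ _).trans (Finset.sum_le_sum fun x hx => ?_)
  rw [norm_smul, hDnorm x (hS hx), mul_one, Real.norm_eq_abs]

lemma scale_approx' {H : Type*} [NormedAddCommGroup H] [InnerProductSpace ℝ H]
    {D : Set H} (hDnorm : ∀ g ∈ D, ‖g‖ = 1) {M E : ℝ} (hM : 0 ≤ M) (hE : 0 < E)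
    {S : Finset H} {c : H → ℝ} (hS : ↑S ⊆ D) (hsum : ∑ x ∈ S, |c x| ≤ M + E)
    (y : H) (hy : ‖y - ∑ x ∈ S, c x • x‖ < E) :
    ∃ b ∈ repSet D 1 M, dist y b < 2 * E := by
  have hME : 0 < M + E := by linarith
  have ht0 : 0 ≤ M / (M + E) := div_nonneg hM hME.le
  have habs : ∀ s : ℝ, 0 ≤ s → ∑ x ∈ S, |s * c x| = s * ∑ x ∈ S, |c x| := by
    intro s hs
    rw [Finset.mul_sum]
    exact Finset.sum_congr rfl fun x _ => by rw [abs_mul, abs_of_nonneg hs]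
  have hsum' : ∑ x ∈ S, |M / (M + E) * c x| ≤ M := by
    rw [habs _ ht0]
    calc M / (M + E) * ∑ x ∈ S, |c x| ≤ M / (M + E) * (M + E) :=
          mul_le_mul_of_nonneg_left hsum ht0
      _ = M := by field_simp
  refine ⟨∑ x ∈ S, (M / (M + E) * c x) • x, ⟨S, fun x => M / (M + E) * c x, hS, by
    simpa only [Real.rpow_one] using hsum', rfl⟩, ?_⟩
  have heq : (∑ x ∈ S, c x • x) - ∑ x ∈ S, (M / (M + E) * c x) • x
      = ∑ x ∈ S, ((1 - M / (M + E)) * c x) • x := by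
    rw [← Finset.sum_sub_distrib]
    exact Finset.sum_congr rfl fun x _ => by rw [← sub_smul]; ring_nf
  have ht1 : 0 ≤ 1 - M / (M + E) := by
    have : M / (M + E) ≤ 1 := by rw [div_le_one hME]; linarith
    linarith
  have h1 : ‖(∑ x ∈ S, c x • x) - ∑ x ∈ S, (M / (M + E) * c x) • x‖ ≤ E := by
    rw [heq]
    calc ‖∑ x ∈ S, ((1 - M / (M + E)) * c x) • x‖ ≤ ∑ x ∈ S, |(1 - M / (M + E)) * c x| :=
          norm_sum_le_abs' hDnorm hS _
      _ = (1 - M / (M + E)) * ∑ x ∈ S, |c x| := habs _ ht1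
      _ ≤ (1 - M / (M + E)) * (M + E) := mul_le_mul_of_nonneg_left hsum ht1
      _ = E := by field_simp; ring
  calc dist y (∑ x ∈ S, (M / (M + E) * c x) • x)
      ≤ ‖y - ∑ x ∈ S, c x • x‖
        + ‖(∑ x ∈ S, c x • x) - ∑ x ∈ S, (M / (M + E) * c x) • x‖ := by
        rw [dist_eq_norm]; exact norm_sub_le_norm_sub_add_norm_sub _ _ _
    _ < 2 * E := by linarith

lemma pga_step {H : Type*} [NormedAddCommGroup H] [InnerProductSpace ℝ H]
    (D : Set H) (hDnorm : ∀ g ∈ D, ‖g‖ = 1)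
    (μ : ℝ) (hμlt : μ < 1/3) (hμ0 : 0 ≤ μ)
    (hμ : ∀ g ∈ D, ∀ S : Finset H, ↑S ⊆ D → g ∉ S → ∑ h ∈ S, |⟪h, g⟫| ≤ μ)
    (f g : H) (hg : g ∈ D)
    (hgr : ∀ g' ∈ D, |⟪f, g'⟫| ≤ |⟪f, g⟫|)
    (M : ℝ) (hM : 0 ≤ M) (hf : f ∈ Aclass D 1 M) :
    f - ⟪f, g⟫ • g ∈ Aclass D 1 M := by
  classical
  have h2μ : 0 < 1 - 2*μ := by linarith
  rw [Aclass, Metric.mem_closure_iff] at hf ⊢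
  intro ε hε
  set a : ℝ := ⟪f, g⟫ with ha
  set δ : ℝ := ε * (1 - 2*μ) / 4 with hδdef
  have hδ : 0 < δ := by positivity
  set E : ℝ := δ / (1 - 2*μ) with hEdef
  have hE : 0 < E := by positivity
  have hδE : δ ≤ E := by
    rw [hEdef, le_div_iff₀ h2μ]; nlinarith [hδ.le]
  have h2E : 2 * E < ε := by
    have hE4 : E = ε / 4 := by
      rw [hEdef, hδdef]; field_simp
    rw [hE4]; linarith
  obtain ⟨h, hhrep, hdist⟩ := hf δ hδ
  obtain ⟨S, c, hS, hsum, hEq⟩ := hhrep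
  simp only [Real.rpow_one] at hsum
  rw [dist_eq_norm] at hdist
  -- basic inner product facts
  have hclose : ∀ g' ∈ D, |⟪f, g'⟫ - ⟪h, g'⟫| < δ := by
    intro g' hg'
    rw [← inner_sub_left]
    calc |⟪f - h, g'⟫| ≤ ‖f - h‖ * ‖g'‖ := abs_real_inner_le_norm _ _
      _ = ‖f - h‖ := by rw [hDnorm g' hg', mul_one]
      _ < δ := hdist
  have hhinner : ∀ g' : H, ⟪h, g'⟫ = ∑ x ∈ S, c x * ⟪x, g'⟫ := by
    intro g'
    rw [hEq, sum_inner]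
    exact Finset.sum_congr rfl fun x _ => real_inner_smul_left _ _ _
  by_cases hSe : S = ∅
  · -- trivial: f is δ-close to 0
    have hh0 : h = 0 := by rw [hEq, hSe]; simp
    rw [hh0, sub_zero] at hdist
    have haa : |a| < δ := by
      calc |a| ≤ ‖f‖ * ‖g‖ := abs_real_inner_le_norm _ _
        _ = ‖f‖ := by rw [hDnorm g hg, mul_one]
        _ < δ := hdist
    refine ⟨0, ⟨∅, 0, by simp, by simpa [Real.rpow_one] using hM, by simp⟩, ?_⟩
    rw [dist_zero_right]
    calc ‖f - a • g‖ ≤ ‖f‖ + ‖a • g‖ := norm_sub_le _ _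
      _ = ‖f‖ + |a| := by rw [norm_smul, hDnorm g hg, mul_one, Real.norm_eq_abs]
      _ < 2 * δ := by linarith
      _ ≤ 2 * E := by linarith
      _ < ε := h2E
  · obtain ⟨gm, hgmS, hgmmax⟩ := Finset.exists_max_image S (fun x => |c x|)
      (Finset.nonempty_of_ne_empty hSe)
    have hgmD : gm ∈ D := hS hgmS
    set B : ℝ := |c gm| with hB
    have hB0 : 0 ≤ B := abs_nonneg _
    have key : ∀ g' ∈ D, ∀ T : Finset H, T ⊆ S → g' ∉ T →
        |∑ x ∈ T, c x * ⟪x, g'⟫| ≤ μ * B := by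
      intro g' hg' T hT hg'T
      calc |∑ x ∈ T, c x * ⟪x, g'⟫| ≤ ∑ x ∈ T, |c x * ⟪x, g'⟫| :=
            Finset.abs_sum_le_sum_abs _ _
        _ = ∑ x ∈ T, |c x| * |⟪x, g'⟫| := by
            exact Finset.sum_congr rfl fun x _ => abs_mul _ _
        _ ≤ ∑ x ∈ T, B * |⟪x, g'⟫| := Finset.sum_le_sum fun x hx =>
            mul_le_mul_of_nonneg_right (hgmmax x (hT hx)) (abs_nonneg _)
        _ = B * ∑ x ∈ T, |⟪x, g'⟫| := by rw [Finset.mul_sum]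
        _ ≤ B * μ := mul_le_mul_of_nonneg_left
            (hμ g' hg' T (fun x hx => hS (hT hx)) hg'T) hB0
        _ = μ * B := mul_comm _ _
    have hAg : ∀ g' ∈ S, |⟪h, g'⟫ - c g'| ≤ μ * B := by
      intro g' hg'S
      have hg'D : g' ∈ D := hS hg'S
      have h1 : ⟪h, g'⟫ = c g' * ⟪g', g'⟫ + ∑ x ∈ S.erase g', c x * ⟪x, g'⟫ := by
        rw [hhinner, ← Finset.add_sum_erase S _ hg'S]
      have h2 : ⟪g', g'⟫ = (1:ℝ) := by
        rw [real_inner_self_eq_norm_sq, hDnorm g' hg'D]; norm_num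
      rw [h1, h2, mul_one, add_sub_cancel_left]
      exact key g' hg'D (S.erase g') (Finset.erase_subset _ _) (Finset.notMem_erase _ _)
    -- greedy lower bound: (1-μ)B - δ ≤ |a|
    have hBa : B - μ * B - δ ≤ |a| := by
      have h1 := hclose gm hgmD
      have h2 := hAg gm hgmS
      have h3 : |c gm| - |⟪f, gm⟫| ≤ |c gm - ⟪f, gm⟫| := abs_sub_abs_le_abs_sub _ _
      have h4 : |c gm - ⟪f, gm⟫| ≤ |c gm - ⟪h, gm⟫| + |⟪h, gm⟫ - ⟪f, gm⟫| :=
        abs_sub_le _ _ _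
      rw [abs_sub_comm (c gm) ⟪h, gm⟫, abs_sub_comm ⟪h, gm⟫ ⟪f, gm⟫] at h4
      have h5 := hgr gm hgmD
      linarith
    by_cases hgS : g ∈ S
    · -- g in the support
      have hA := hAg g hgS
      have hC := hclose g hg
      rw [← ha] at hC
      have hac : |a - c g| ≤ δ + μ * B := by
        have h4 : |a - c g| ≤ |a - ⟪h, g⟫| + |⟪h, g⟫ - c g| := abs_sub_le _ _ _
        linarith
      have haup : |a| ≤ |c g| + (δ + μ * B) := by
        have := abs_sub_abs_le_abs_sub a (c g)
        linarith
      have hBbound : B - 2 * (μ * B) ≤ |c g| + 2 * δ := by linarith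
      have hfinal : |c g - a| ≤ |c g| + E := by
        rw [abs_sub_comm]
        have hdd : E * (1 - 2*μ) = δ := by
          rw [hEdef]; field_simp
        nlinarith [abs_nonneg (c g), mul_le_mul_of_nonneg_left hBbound hμ0,
          mul_pos hδ h2μ]
      set c' : H → ℝ := fun x => if x = g then c g - a else c x with hc'
      have hsum' : ∑ x ∈ S, |c' x| ≤ M + E := by
        have e1 : ∑ x ∈ S, |c' x| = |c g - a| + ∑ x ∈ S.erase g, |c x| := by
          rw [← Finset.add_sum_erase S (fun x => |c' x|) hgS]
          congr 1
          · rw [hc']; simp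
          · exact Finset.sum_congr rfl fun x hx => by
              rw [hc']; simp [Finset.ne_of_mem_erase hx]
        have e2 : |c g| + ∑ x ∈ S.erase g, |c x| = ∑ x ∈ S, |c x| :=
          Finset.add_sum_erase S (fun x => |c x|) hgS
        linarith
      have heq' : ∑ x ∈ S, c' x • x = h - a • g := by
        have hterm : ∀ x ∈ S, c' x • x = c x • x - (if x = g then a • x else 0) := by
          intro x hx
          by_cases hxg : x = g
          · subst hxg
            rw [hc']
            simp [sub_smul]
          · rw [hc']
            simp [hxg]
        rw [Finset.sum_congr rfl hterm, Finset.sum_sub_distrib, hEq]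
        congr 1
        simp [Finset.sum_ite_eq', hgS]
      obtain ⟨b, hb, hbd⟩ := scale_approx' hDnorm hM hE hS hsum' (f - a • g)
        (by rw [heq']; simpa using lt_of_lt_of_le hdist hδE)
      exact ⟨b, hb, lt_trans hbd h2E⟩
    · -- g outside the support
      have hBg : |⟪h, g⟫| ≤ μ * B := by
        rw [hhinner]
        exact key g hg S (Finset.Subset.refl S) hgS
      have hC := hclose g hg
      rw [← ha] at hC
      have haB : |a| ≤ μ * B + δ := by
        have h4 : |a| ≤ |a - ⟪h, g⟫| + |⟪h, g⟫| := by
          have := abs_sub_abs_le_abs_sub a ⟪h, g⟫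
          linarith [abs_nonneg (a - ⟪h, g⟫)]
        linarith
      have hB2 : B - 2 * (μ * B) ≤ 2 * δ := by linarith
      have haE : |a| ≤ E := by
        have hdd : E * (1 - 2*μ) = δ := by rw [hEdef]; field_simp
        nlinarith [mul_le_mul_of_nonneg_left hB2 hμ0]
      set c' : H → ℝ := fun x => if x = g then -a else c x with hc'
      have hS' : ↑(insert g S) ⊆ D := by
        rw [Finset.coe_insert]
        exact Set.insert_subset hg hS
      have hsum' : ∑ x ∈ insert g S, |c' x| ≤ M + E := by
        rw [Finset.sum_insert hgS]
        have e1 : ∑ x ∈ S, |c' x| = ∑ x ∈ S, |c x| :=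
          Finset.sum_congr rfl fun x hx => by
            rw [hc']; simp [ne_of_mem_of_not_mem hx hgS]
        have e2 : |c' g| = |a| := by rw [hc']; simp
        rw [e1, e2]
        linarith
      have hcg : c' g = -a := by rw [hc']; simp
      have e3 : ∑ x ∈ S, c' x • x = ∑ x ∈ S, c x • x :=
        Finset.sum_congr rfl fun x hx => by
          rw [hc']; simp [ne_of_mem_of_not_mem hx hgS]
      have heq' : ∑ x ∈ insert g S, c' x • x = h - a • g := by
        rw [Finset.sum_insert hgS, hcg, e3, hEq, neg_smul]
        abel
      obtain ⟨b, hb, hbd⟩ := scale_approx' hDnorm hM hE hS' hsum' (f - a • g)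
        (by rw [heq']; simpa using lt_of_lt_of_le hdist hδE)
      exact ⟨b, hb, lt_trans hbd h2E⟩

/-- Invariance of `|·|₁` under PGA with small coherence: if `μ₁(D) < 1/3` and
`f ∈ A¹(D)`, then every PGA residual `f_m` lies in `A¹(D)` with
`|f_m|₁ ≤ |f|₁`. -/
theorem pga_A1_norm_invariance
    {H : Type*} [NormedAddCommGroup H] [InnerProductSpace ℝ H] [CompleteSpace H]
    [TopologicalSpace.SeparableSpace H]
    (D : Set H) (hDnorm : ∀ g ∈ D, ‖g‖ = 1)
    (hDdense : Dense (↑(Submodule.span ℝ D) : Set H))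
    (μ : ℝ) (hμlt : μ < 1 / 3)
    (hμ : ∀ g ∈ D, ∀ S : Finset H, ↑S ⊆ D → g ∉ S →
      ∑ h ∈ S, |⟪h, g⟫| ≤ μ)
    (f : H) (hf : ∃ M : ℝ, 0 ≤ M ∧ f ∈ Aclass D 1 M)
    (fs : ℕ → H) (gs : ℕ → H)
    (h0 : fs 0 = f)
    (hgD : ∀ m, gs (m + 1) ∈ D)
    (hgreedy : ∀ m, ∀ g ∈ D, |⟪fs m, g⟫| ≤ |⟪fs m, gs (m + 1)⟫|)
    (hstep : ∀ m, fs (m + 1) = fs m - ⟪fs m, gs (m + 1)⟫ • gs (m + 1)) :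
    ∀ m : ℕ, (∃ M : ℝ, 0 ≤ M ∧ fs m ∈ Aclass D 1 M) ∧
      Anorm D 1 (fs m) ≤ Anorm D 1 f := by
  classical
  have hμ0 : 0 ≤ μ := by
    have := hμ (gs 1) (hgD 0) ∅ (by simp) (by simp)
    simpa using this
  have hstep' : ∀ m, ∀ M : ℝ, 0 ≤ M → fs m ∈ Aclass D 1 M → fs (m+1) ∈ Aclass D 1 M := by
    intro m M hM hmem
    rw [hstep m]
    exact pga_step D hDnorm μ hμlt hμ0 hμ (fs m) (gs (m+1)) (hgD m) (hgreedy m) M hM hmem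
  have hsub : ∀ m : ℕ, {M : ℝ | 0 ≤ M ∧ f ∈ Aclass D 1 M} ⊆
      {M : ℝ | 0 ≤ M ∧ fs m ∈ Aclass D 1 M} := by
    intro m
    induction m with
    | zero => rw [h0]
    | succ n ih =>
      intro M hM
      obtain ⟨h1, h2⟩ := ih hM
      exact ⟨h1, hstep' n M h1 h2⟩
  intro m
  obtain ⟨M, hM⟩ := hf
  refine ⟨⟨M, hsub m hM⟩, ?_⟩
  exact csInf_le_csInf ⟨0, fun x hx => hx.1⟩ ⟨M, hM⟩ (hsub m)
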